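/- Let φ : y → z^{⊗N} be a q-relation of length N for the Drinfeld quiver Q_z, where q ∈ k is a primitive N-th root of unity, and let (a, f) be a Q_z-module such that a has a right dual a^∗ in A. If (a, f) satisfies the relation φ (φ(f) = 0), then the right dual module (a^∗, f†) also satisfies the relation φ: φ(f†) = 0. -/

import Mathlib

/-!
Statement 7: If `φ : y → z^{⊗N}` is a `q`-relation of length `N` for the Drinfeld quiver `Q_z`
and the module `(a, f)` (with `a` having a right dual) satisfies the relation `φ`, then so does
the right dual module `(a^∗, f†)`.
-/

open CategoryTheory MonoidalCategory
open BraidedCategory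
set_option linter.unusedSectionVars false
set_option linter.unusedVariables false

universe v u

variable {k : Type*} [Field k]
variable {A : Type u} [Category.{v} A] [MonoidalCategory A]
  [Preadditive A] [CategoryTheory.Linear k A] [MonoidalPreadditive A] [MonoidalLinear k A]

/-- The `n`-th tensor power `z^{⊗n}` of an object `z` of the Drinfeld center of `A`. -/
noncomputable def zcpow (z : CategoryTheory.Center A) : ℕ → CategoryTheory.Center A
  | 0 => 𝟙_ (CategoryTheory.Center A)
  | n + 1 => z ⊗ zcpow z n

/-- The iterated action `f^{∗n} : z^{⊗n} ⊗ a ⟶ a` of a module `(a, f)` over the Drinfeld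
quiver `Q_z` (suppressing associators). -/
noncomputable def fstar (z : CategoryTheory.Center A) {a : A} (f : z.1 ⊗ a ⟶ a) :
    (n : ℕ) → ((zcpow z n).1 ⊗ a ⟶ a)
  | 0 => (λ_ a).hom
  | n + 1 => (α_ z.1 (zcpow z n).1 a).hom ≫ (z.1 ◁ fstar z f n) ≫ f

/-- The morphism `id_{z^{⊗i}} ⊗ c_{z,z} ⊗ id_{z^{⊗(n-i-2)}} : z^{⊗n} ⟶ z^{⊗n}` in the
Drinfeld center, braiding the `(i+1)`-st and `(i+2)`-nd tensor factors. -/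
noncomputable def swapAt (z : CategoryTheory.Center A) :
    ℕ → (n : ℕ) → (zcpow z n ⟶ zcpow z n)
  | 0, 0 => 𝟙 _
  | 0, 1 => 𝟙 _
  | 0, (m + 2) =>
      (α_ z z (zcpow z m)).inv ≫ ((β_ z z).hom ▷ zcpow z m) ≫ (α_ z z (zcpow z m)).hom
  | (_ + 1), 0 => 𝟙 _
  | (i + 1), (n + 1) => z ◁ swapAt z i n

/-- The morphism `φ(f) = f^{∗N} ∘ (φ ⊗ id_a)`; the module `(a, f)` satisfies the relation `φ`
iff `φ(f) = 0`. -/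
noncomputable def relMor (z : CategoryTheory.Center A) {y : CategoryTheory.Center A} {N : ℕ}
    (φ : y ⟶ zcpow z N) {a : A} (f : z.1 ⊗ a ⟶ a) : y.1 ⊗ a ⟶ a :=
  (φ.f ▷ a) ≫ fstar z f N

/-- The action `f† : z ⊗ a^∗ ⟶ a^∗` of the right dual module `(a^∗, f†)` of `(a, f)`. -/
noncomputable def fdag (z : CategoryTheory.Center A) {a aS : A} (f : z.1 ⊗ a ⟶ a)
    (ev : aS ⊗ a ⟶ 𝟙_ A) (coev : 𝟙_ A ⟶ a ⊗ aS) : z.1 ⊗ aS ⟶ aS :=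
  - ((z.2.β aS).hom ≫ (ρ_ (aS ⊗ z.1)).inv ≫ ((aS ⊗ z.1) ◁ coev)
      ≫ (α_ aS z.1 (a ⊗ aS)).hom ≫ (aS ◁ (α_ z.1 a aS).inv) ≫ (aS ◁ (f ▷ aS))
      ≫ (α_ aS a aS).inv ≫ (ev ▷ aS) ≫ (λ_ aS).hom)

namespace DrinfeldAux

section CenterStuff

variable (z : CategoryTheory.Center A)

@[simp] lemma zcpow_succ (n : ℕ) : zcpow z (n + 1) = z ⊗ zcpow z n := rfl
@[simp] lemma zcpow_zero : zcpow z 0 = 𝟙_ (CategoryTheory.Center A) := rfl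

/-- regrouping iso `z^{⊗n} ⊗ z ⟶ z^{⊗(n+1)}` in the center -/
noncomputable def csig : (n : ℕ) → (zcpow z n ⊗ z ⟶ zcpow z (n + 1))
  | 0 => (λ_ z).hom ≫ (ρ_ z).inv
  | n + 1 => (α_ z (zcpow z n) z).hom ≫ (z ◁ csig n)

/-- the reversal morphism on `z^{⊗n}` in the center -/
noncomputable def crev : (n : ℕ) → (zcpow z n ⟶ zcpow z n)
  | 0 => 𝟙 _
  | n + 1 => (β_ z (zcpow z n)).hom ≫ (crev n ▷ z) ≫ csig z n

/-- move-front-to-back morphism -/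
noncomputable def cmov (n : ℕ) : zcpow z (n + 1) ⟶ zcpow z (n + 1) :=
  (β_ z (zcpow z n)).hom ≫ csig z n

noncomputable def word (n : ℕ) : List ℕ → (zcpow z n ⟶ zcpow z n)
  | [] => 𝟙 _
  | i :: l => swapAt z i n ≫ word n l

def revWord : ℕ → List ℕ
  | 0 => []
  | n + 1 => (revWord n).map (· + 1) ++ List.range n

lemma crev_succ' (n : ℕ) : crev z (n + 1) = (z ◁ crev z n) ≫ cmov z n := by
  rw [crev, cmov]; simp
  exact (braiding_naturality_right_assoc _ _ _).symm

lemma cmov_zero : cmov z 0 = 𝟙 _ := by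
  simp [cmov, csig, braiding_tensorUnit_right]

lemma cmov_succ (n : ℕ) : cmov z (n + 1) = swapAt z 0 (n + 2) ≫ (z ◁ cmov z n) := by
  rw [cmov, csig, cmov, swapAt]
  simp [braiding_tensor_right_hom, MonoidalCategory.whiskerLeft_comp]
  erw [MonoidalCategory.whiskerLeft_comp]

lemma word_append (n : ℕ) (l₁ l₂ : List ℕ) :
    word z n (l₁ ++ l₂) = word z n l₁ ≫ word z n l₂ := by
  induction l₁ with
  | nil => simp [word]
  | cons i l ih => simp [word, ih]

lemma word_whisker (n : ℕ) (l : List ℕ) :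
    z ◁ word z n l = word z (n + 1) (l.map (· + 1)) := by
  induction l with
  | nil => simp [word]
  | cons i l ih =>
      simp only [word, List.map_cons, MonoidalCategory.whiskerLeft_comp, ih]
      rfl

lemma cmov_word (n : ℕ) : cmov z n = word z (n + 1) (List.range n) := by
  induction n with
  | zero => simp [cmov_zero, word]
  | succ n ih =>
      rw [cmov_succ, ih, word_whisker, List.range_succ_eq_map]
      simp [word]

lemma crev_word (n : ℕ) : crev z n = word z n (revWord n) := by
  induction n with
  | zero => simp [crev, revWord, word]
  | succ n ih =>
      rw [crev_succ', ih, cmov_word, revWord, word_append, word_whisker]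
      rfl

lemma revWord_mem (n : ℕ) : ∀ i ∈ revWord n, i + 2 ≤ n := by
  induction n with
  | zero => simp [revWord]
  | succ n ih =>
      intro i hi
      rw [revWord, List.mem_append] at hi
      rcases hi with hi | hi
      · obtain ⟨j, hj, rfl⟩ := List.mem_map.mp hi
        have := ih j hj; omega
      · have := List.mem_range.mp hi; omega

lemma word_absorb {q : k} {y : CategoryTheory.Center A} {N : ℕ} (ψ : y ⟶ zcpow z N)
    (hψ : ∀ i : ℕ, i + 2 ≤ N → (ψ ≫ swapAt z i N).f = q • ψ.f)
    (l : List ℕ) (hl : ∀ i ∈ l, i + 2 ≤ N) :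
    (ψ ≫ word z N l).f = q ^ l.length • ψ.f := by
  induction l with
  | nil => simp [word]
  | cons i l ih =>
      have h1 : (ψ ≫ word z N (i :: l)).f = (q • ψ.f) ≫ (word z N l).f := by
        rw [word, ← Category.assoc, Center.comp_f, hψ i (hl i (List.mem_cons_self))]
      rw [h1, CategoryTheory.Linear.smul_comp, ← Center.comp_f,
        ih (fun j hj => hl j (List.mem_cons_of_mem i hj)), List.length_cons, pow_succ',
        mul_smul]

lemma crev_absorb {q : k} {y : CategoryTheory.Center A} {N : ℕ} (ψ : y ⟶ zcpow z N)
    (hψ : ∀ i : ℕ, i + 2 ≤ N → (ψ ≫ swapAt z i N).f = q • ψ.f) :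
    (ψ ≫ crev z N).f = q ^ (revWord N).length • ψ.f := by
  rw [crev_word]
  exact word_absorb z ψ hψ _ (revWord_mem N)

end CenterStuff

section Mate

variable {a aS : A} (ev : aS ⊗ a ⟶ 𝟙_ A) (coev : 𝟙_ A ⟶ a ⊗ aS)

noncomputable def mate (w : A) (h : w ⊗ a ⟶ a) : aS ⊗ w ⟶ aS :=
  (ρ_ (aS ⊗ w)).inv ≫ ((aS ⊗ w) ◁ coev) ≫ (α_ aS w (a ⊗ aS)).hom ≫ (aS ◁ (α_ w a aS).inv)
    ≫ (aS ◁ (h ▷ aS)) ≫ (α_ aS a aS).inv ≫ (ev ▷ aS) ≫ (λ_ aS).hom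

lemma fdag_eq (z : CategoryTheory.Center A) (f : z.1 ⊗ a ⟶ a) :
    fdag z f ev coev = -((z.2.β aS).hom ≫ mate ev coev z.1 f) := rfl

lemma mate_zero (w : A) : mate ev coev w (0 : w ⊗ a ⟶ a) = 0 := by simp [mate]

lemma mate_nat {w w' : A} (u : w' ⟶ w) (h : w ⊗ a ⟶ a) :
    (aS ◁ u) ≫ mate ev coev w h = mate ev coev w' ((u ▷ a) ≫ h) := by
  calc (aS ◁ u) ≫ mate ev coev w h
      = 𝟙 _ ⊗≫ ((aS ◁ u) ▷ (𝟙_ A) ≫ ((aS ⊗ w) ◁ coev)) ⊗≫ (aS ◁ (h ▷ aS))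
          ⊗≫ (ev ▷ aS) ⊗≫ 𝟙 _ := by
        simp only [mate]; monoidal
    _ = 𝟙 _ ⊗≫ (((aS ⊗ w' : A) ◁ coev) ≫ ((aS ◁ u) ▷ (a ⊗ aS : A))) ⊗≫ (aS ◁ (h ▷ aS))
          ⊗≫ (ev ▷ aS) ⊗≫ 𝟙 _ := by rw [← whisker_exchange]
    _ = mate ev coev w' ((u ▷ a) ≫ h) := by
        simp only [mate, comp_whiskerRight, MonoidalCategory.whiskerLeft_comp]; monoidal


lemma mate_comp
    (zig : (coev ▷ a) ≫ (α_ a aS a).hom ≫ (a ◁ ev) = (λ_ a).hom ≫ (ρ_ a).inv)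
    {w v : A} (g : w ⊗ a ⟶ a) (h : v ⊗ a ⟶ a) :
    (α_ aS w v).inv ≫ (mate ev coev w g ▷ v) ≫ mate ev coev v h
      = mate ev coev (w ⊗ v) ((α_ w v a).hom ≫ (w ◁ h) ≫ g) := by
  calc (α_ aS w v).inv ≫ (mate ev coev w g ▷ v) ≫ mate ev coev v h
      = 𝟙 _ ⊗≫ (aS ◁ (w ◁ coev)) ▷ v
        ⊗≫ (((aS ◁ g) ≫ ev) ▷ (aS ⊗ (v ⊗ 𝟙_ A) : A)
              ≫ (𝟙_ A) ◁ (aS ◁ ((v ◁ coev) ≫ (α_ v a aS).inv ≫ (h ▷ aS))))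
        ⊗≫ (ev ▷ aS) ⊗≫ 𝟙 _ := by
          simp only [mate, comp_whiskerRight, MonoidalCategory.whiskerLeft_comp,
            Category.assoc]
          monoidal
    _ = 𝟙 _ ⊗≫ (aS ◁ (w ◁ coev)) ▷ v
        ⊗≫ ((aS ⊗ (w ⊗ a) : A) ◁ (aS ◁ ((v ◁ coev) ≫ (α_ v a aS).inv ≫ (h ▷ aS)))
              ≫ ((aS ◁ g) ≫ ev) ▷ (aS ⊗ (a ⊗ aS) : A))
        ⊗≫ (ev ▷ aS) ⊗≫ 𝟙 _ := by rw [← whisker_exchange]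
    _ = 𝟙 _ ⊗≫ (aS ◁ (w ◁ coev)) ▷ v
        ⊗≫ ((aS ⊗ (w ⊗ a) : A) ◁ (aS ◁ ((v ◁ coev) ≫ (α_ v a aS).inv ≫ (h ▷ aS))))
        ⊗≫ (((aS ◁ g) ≫ ev) ▷ ((aS ⊗ a : A) ⊗ aS) ≫ (𝟙_ A) ◁ (ev ▷ aS))
        ⊗≫ 𝟙 _ := by monoidal
    _ = 𝟙 _ ⊗≫ (aS ◁ (w ◁ coev)) ▷ v
        ⊗≫ ((aS ⊗ (w ⊗ a) : A) ◁ (aS ◁ ((v ◁ coev) ≫ (α_ v a aS).inv ≫ (h ▷ aS))))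
        ⊗≫ ((aS ⊗ (w ⊗ a) : A) ◁ (ev ▷ aS) ≫ ((aS ◁ g) ≫ ev) ▷ (𝟙_ A ⊗ aS : A))
        ⊗≫ 𝟙 _ := by rw [← whisker_exchange]
    _ = 𝟙 _ ⊗≫ ((aS ◁ (w ◁ coev)) ▷ (v ⊗ 𝟙_ A : A)
              ≫ (aS ⊗ (w ⊗ (a ⊗ aS)) : A) ◁ ((v ◁ coev) ≫ (α_ v a aS).inv ≫ (h ▷ aS)))
        ⊗≫ ((aS ⊗ (w ⊗ a) : A) ◁ (ev ▷ aS))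
        ⊗≫ ((aS ◁ g) ≫ ev) ▷ (𝟙_ A ⊗ aS : A) ⊗≫ 𝟙 _ := by monoidal
    _ = 𝟙 _ ⊗≫ ((aS ⊗ (w ⊗ 𝟙_ A) : A) ◁ ((v ◁ coev) ≫ (α_ v a aS).inv ≫ (h ▷ aS))
              ≫ (aS ◁ (w ◁ coev)) ▷ (a ⊗ aS : A))
        ⊗≫ ((aS ⊗ (w ⊗ a) : A) ◁ (ev ▷ aS))
        ⊗≫ ((aS ◁ g) ≫ ev) ▷ (𝟙_ A ⊗ aS : A) ⊗≫ 𝟙 _ := by rw [← whisker_exchange]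
    _ = 𝟙 _ ⊗≫ ((aS ⊗ w : A) ◁ ((v ◁ coev) ≫ (α_ v a aS).inv ≫ (h ▷ aS)))
        ⊗≫ (((aS ⊗ w : A) ◁ ((coev ▷ a) ≫ (α_ a aS a).hom ≫ (a ◁ ev))) ▷ aS)
        ⊗≫ ((aS ◁ g) ≫ ev) ▷ (𝟙_ A ⊗ aS : A) ⊗≫ 𝟙 _ := by monoidal
    _ = 𝟙 _ ⊗≫ ((aS ⊗ w : A) ◁ ((v ◁ coev) ≫ (α_ v a aS).inv ≫ (h ▷ aS)))
        ⊗≫ (((aS ⊗ w : A) ◁ ((λ_ a).hom ≫ (ρ_ a).inv)) ▷ aS)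
        ⊗≫ ((aS ◁ g) ≫ ev) ▷ (𝟙_ A ⊗ aS : A) ⊗≫ 𝟙 _ := by rw [zig]
    _ = mate ev coev (w ⊗ v) ((α_ w v a).hom ≫ (w ◁ h) ≫ g) := by
          simp only [mate, comp_whiskerRight, MonoidalCategory.whiskerLeft_comp,
            Category.assoc]
          monoidal

lemma mate_lambda
    (zag : (aS ◁ coev) ≫ (α_ aS a aS).inv ≫ (ev ▷ aS) = (ρ_ aS).hom ≫ (λ_ aS).inv) :
    mate ev coev (𝟙_ A) (λ_ a).hom = (ρ_ aS).hom := by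
  calc mate ev coev (𝟙_ A) (λ_ a).hom
      = 𝟙 _ ⊗≫ ((aS ◁ coev) ≫ (α_ aS a aS).inv ≫ (ev ▷ aS)) ⊗≫ 𝟙 _ := by
        simp only [mate]; monoidal
    _ = 𝟙 _ ⊗≫ ((ρ_ aS).hom ≫ (λ_ aS).inv) ⊗≫ 𝟙 _ := by rw [zag]
    _ = (ρ_ aS).hom := by monoidal

end Mate

section Main

variable (z : CategoryTheory.Center A) {a aS : A}

lemma sig_fstar (f : z.1 ⊗ a ⟶ a) (n : ℕ) :
    ((csig z n).f ▷ a) ≫ fstar z f (n + 1)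
      = (α_ (zcpow z n).1 z.1 a).hom ≫ ((zcpow z n).1 ◁ f) ≫ fstar z f n := by
  induction n with
  | zero =>
      have c0 : (csig z 0).f = (λ_ z.1).hom ≫ (ρ_ z.1).inv := by
        simp [csig]
        rfl
      rw [c0]
      show (((λ_ z.1).hom ≫ (ρ_ z.1).inv) ▷ a)
          ≫ ((α_ z.1 (𝟙_ A) a).hom ≫ (z.1 ◁ (λ_ a).hom) ≫ f)
        = (α_ (𝟙_ A) z.1 a).hom ≫ ((𝟙_ A) ◁ f) ≫ (λ_ a).hom
      monoidal
  | succ n ih =>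
      have e : (csig z (n + 1)).f
          = (α_ z.1 (zcpow z n).1 z.1).hom ≫ (z.1 ◁ (csig z n).f) := rfl
      have e2 : fstar z f (n + 2)
          = (α_ z.1 (zcpow z (n + 1)).1 a).hom ≫ (z.1 ◁ fstar z f (n + 1)) ≫ f := rfl
      have e3 : fstar z f (n + 1)
          = (α_ z.1 (zcpow z n).1 a).hom ≫ (z.1 ◁ fstar z f n) ≫ f := rfl
      rw [e, e2]
      calc ((α_ z.1 (zcpow z n).1 z.1).hom ≫ (z.1 ◁ (csig z n).f)) ▷ a
            ≫ (α_ z.1 (zcpow z (n + 1)).1 a).hom ≫ (z.1 ◁ fstar z f (n + 1)) ≫ f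
          = ((α_ z.1 (zcpow z n).1 z.1).hom ▷ a)
              ≫ (α_ z.1 ((zcpow z n).1 ⊗ z.1) a).hom
              ≫ (z.1 ◁ (((csig z n).f ▷ a) ≫ fstar z f (n + 1))) ≫ f := by
            simp only [comp_whiskerRight, MonoidalCategory.whiskerLeft_comp, Category.assoc]
            erw [associator_naturality_middle_assoc]
            congr 2
            exact (MonoidalCategory.whiskerLeft_comp_assoc _ _ _ _).symm
        _ = ((α_ z.1 (zcpow z n).1 z.1).hom ▷ a)
              ≫ (α_ z.1 ((zcpow z n).1 ⊗ z.1) a).hom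
              ≫ (z.1 ◁ ((α_ (zcpow z n).1 z.1 a).hom ≫ ((zcpow z n).1 ◁ f)
                    ≫ fstar z f n)) ≫ f := by erw [ih]
        _ = (α_ (z.1 ⊗ (zcpow z n).1) z.1 a).hom ≫ ((z.1 ⊗ (zcpow z n).1) ◁ f)
              ≫ fstar z f (n + 1) := by
            rw [e3]
            show _ = (α_ (z.1 ⊗ (zcpow z n).1) z.1 a).hom ≫ ((z.1 ⊗ (zcpow z n).1) ◁ f)
              ≫ (α_ z.1 (zcpow z n).1 a).hom ≫ (z.1 ◁ fstar z f n) ≫ f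
            simp only [MonoidalCategory.whiskerLeft_comp, Category.assoc]
            rw [pentagon_assoc, ← associator_naturality_right_assoc]

lemma keystep (n : ℕ) :
    (α_ z.1 (zcpow z n).1 aS).hom
      ≫ (z.2.β ((zcpow z n).1 ⊗ aS)).hom
      ≫ (((zcpow z n).2.β aS).hom ▷ z.1)
      ≫ ((aS ◁ (crev z n).f) ▷ z.1)
      ≫ (α_ aS (zcpow z n).1 z.1).hom
      ≫ (aS ◁ (csig z n).f)
    = ((zcpow z (n + 1)).2.β aS).hom ≫ (aS ◁ (crev z (n + 1)).f) := by
  have hb1 : ((zcpow z (n + 1)).2.β aS).hom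
      = (α_ z.1 (zcpow z n).1 aS).hom ≫ (z.1 ◁ ((zcpow z n).2.β aS).hom)
        ≫ (α_ z.1 aS (zcpow z n).1).inv ≫ ((z.2.β aS).hom ▷ (zcpow z n).1)
        ≫ (α_ aS z.1 (zcpow z n).1).hom := rfl
  have hc : (crev z (n + 1)).f
      = (z.2.β (zcpow z n).1).hom ≫ ((crev z n).f ▷ z.1) ≫ (csig z n).f := rfl
  have hD : (((z.2.β (zcpow z n).1).hom ≫ ((zcpow z n).2.β z.1).hom) ▷ aS)
      ≫ ((zcpow z (n + 1)).2.β aS).hom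
      = ((zcpow z (n + 1)).2.β aS).hom
        ≫ (aS ◁ ((z.2.β (zcpow z n).1).hom ≫ ((zcpow z n).2.β z.1).hom)) :=
    ((β_ z (zcpow z n)).hom ≫ (β_ (zcpow z n) z).hom).comm aS
  have h2 : (α_ (zcpow z n).1 aS z.1).inv ≫ (((zcpow z n).2.β aS).hom ▷ z.1)
      = ((zcpow z n).2.β (aS ⊗ z.1)).hom ≫ (α_ aS z.1 (zcpow z n).1).hom
        ≫ (aS ◁ ((zcpow z n).2.β z.1).inv) ≫ (α_ aS (zcpow z n).1 z.1).inv := by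
    rw [HalfBraiding.monoidal]
    simp
  rw [z.2.monoidal]
  simp only [Category.assoc, Iso.hom_inv_id_assoc]
  slice_lhs 4 5 => rw [h2]
  simp only [Category.assoc]
  rw [HalfBraiding.naturality_assoc]
  rw [(zcpow z n).2.monoidal]
  simp only [Category.assoc, Iso.hom_inv_id_assoc, Iso.inv_hom_id_assoc]
  rw [associator_naturality_middle_assoc]
  try simp only [Iso.hom_inv_id_assoc]
  slice_lhs 1 2 => rw [← comp_whiskerRight]
  slice_lhs 2 6 => rw [← hb1]
  slice_lhs 1 2 => erw [← Category.assoc, hD]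
  simp only [Category.assoc, ← MonoidalCategory.whiskerLeft_comp]
  rw [hc]
  erw [Category.assoc, Category.assoc, ← MonoidalCategory.whiskerLeft_comp]
  erw [Iso.inv_hom_id_assoc, ← MonoidalCategory.whiskerLeft_comp,
    ← MonoidalCategory.whiskerLeft_comp, Category.assoc (z.2.β (zcpow z n).1).hom,
    Iso.hom_inv_id_assoc]
  rfl

lemma fstar_fdag (f : z.1 ⊗ a ⟶ a) (ev : aS ⊗ a ⟶ 𝟙_ A) (coev : 𝟙_ A ⟶ a ⊗ aS)
    (zig : (coev ▷ a) ≫ (α_ a aS a).hom ≫ (a ◁ ev) = (λ_ a).hom ≫ (ρ_ a).inv)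
    (zag : (aS ◁ coev) ≫ (α_ aS a aS).inv ≫ (ev ▷ aS) = (ρ_ aS).hom ≫ (λ_ aS).inv)
    (n : ℕ) :
    fstar z (fdag z f ev coev) n
      = ((-1 : k) ^ n) • (((zcpow z n).2.β aS).hom ≫ (aS ◁ (crev z n).f)
          ≫ mate ev coev (zcpow z n).1 (fstar z f n)) := by
  induction n with
  | zero =>
      show (λ_ aS).hom = ((-1 : k) ^ 0)
        • (((𝟙_ (CategoryTheory.Center A)).2.β aS).hom
            ≫ (aS ◁ 𝟙 (𝟙_ A))
            ≫ mate ev coev (𝟙_ A) (λ_ a).hom)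
      rw [mate_lambda ev coev zag]
      simp only [pow_zero, one_smul]
      show (λ_ aS).hom = ((λ_ aS).hom ≫ (ρ_ aS).inv)
        ≫ ((aS ◁ 𝟙 (𝟙_ A) : aS ⊗ 𝟙_ A ⟶ aS ⊗ 𝟙_ A)) ≫ (ρ_ aS).hom
      simp
  | succ n ih =>
      have e2 : fstar z (fdag z f ev coev) (n + 1)
          = (α_ z.1 (zcpow z n).1 aS).hom ≫ (z.1 ◁ fstar z (fdag z f ev coev) n)
            ≫ fdag z f ev coev := rfl
      have hE : (α_ z.1 (zcpow z n).1 aS).hom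
          ≫ (z.1 ◁ (((zcpow z n).2.β aS).hom ≫ (aS ◁ (crev z n).f)
              ≫ mate ev coev (zcpow z n).1 (fstar z f n)))
          ≫ (z.2.β aS).hom ≫ mate ev coev z.1 f
        = ((zcpow z (n + 1)).2.β aS).hom ≫ (aS ◁ (crev z (n + 1)).f)
            ≫ mate ev coev (zcpow z (n + 1)).1 (fstar z f (n + 1)) := by
        have mc := (Iso.inv_comp_eq _).1
          (mate_comp ev coev zig (fstar z f n) f (w := (zcpow z n).1) (v := z.1))
        simp only [MonoidalCategory.whiskerLeft_comp, Category.assoc,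
          HalfBraiding.naturality_assoc]
        erw [mc, ← sig_fstar, ← mate_nat]
        rw [reassoc_of% (keystep z n)]
        exact Category.assoc _ _ _
      rw [e2, ih, fdag_eq]
      simp only [MonoidalLinear.whiskerLeft_smul, Linear.comp_smul, Linear.smul_comp,
        Preadditive.comp_neg, Preadditive.neg_comp, smul_neg, Category.assoc]
      rw [hE, pow_succ, mul_smul, neg_one_smul, smul_neg]
      rfl

end Main

end DrinfeldAux

/-- If `(a, f)` satisfies a `q`-relation `φ` of length `N` (with `q` a primitive `N`-th root of
unity), then so does the right dual module `(a^∗, f†)`. -/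
theorem fdag_satisfies_q_relation (z : CategoryTheory.Center A) {N : ℕ} {q : k}
    (hq : IsPrimitiveRoot q N)
    {y : CategoryTheory.Center A} (φ : y ⟶ zcpow z N)
    (hφ : ∀ i : ℕ, i + 2 ≤ N → (φ ≫ swapAt z i N).f = q • φ.f)
    {a aS : A} (f : z.1 ⊗ a ⟶ a)
    (ev : aS ⊗ a ⟶ 𝟙_ A) (coev : 𝟙_ A ⟶ a ⊗ aS)
    (zig : (coev ▷ a) ≫ (α_ a aS a).hom ≫ (a ◁ ev) = (λ_ a).hom ≫ (ρ_ a).inv)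
    (zag : (aS ◁ coev) ≫ (α_ aS a aS).inv ≫ (ev ▷ aS) = (ρ_ aS).hom ≫ (λ_ aS).inv)
    (hf : relMor z φ f = 0) :
    relMor z φ (fdag z f ev coev) = 0 := by
  have habs : φ.f ≫ (DrinfeldAux.crev z N).f
      = q ^ (DrinfeldAux.revWord N).length • φ.f := by
    rw [← CategoryTheory.Center.comp_f]
    exact DrinfeldAux.crev_absorb z φ hφ
  have hz : (φ.f ▷ a) ≫ fstar z f N = 0 := hf
  rw [relMor]
  rw [DrinfeldAux.fstar_fdag (k := k) z f ev coev zig zag N]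
  rw [Linear.comp_smul]
  rw [CategoryTheory.Center.Hom.comm_assoc]
  rw [← MonoidalCategory.whiskerLeft_comp_assoc]
  rw [habs]
  rw [MonoidalLinear.whiskerLeft_smul (R := k)]
  rw [Linear.smul_comp]
  rw [DrinfeldAux.mate_nat]
  rw [hz]
  rw [DrinfeldAux.mate_zero]
  simp
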